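/- Entropy merging bound: if p' is obtained from the concatenation r of q̃_2 (typical flow after the two-step walk) and the leaked distribution p̂', by merging at most load_M·k + 1 entries of r per vertex, then H(p') ≥ H(q̃_2) + H(p̂') − log(load_M·k + 1). -/

import Mathlib

open Finset

/-- Entropy of a single value, `H(u) = -u * log u` (natural logarithm). -/
noncomputable def Hf (u : ℝ) : ℝ := -u * Real.log u

lemma term_bound (x s m : ℝ) (hx : 0 ≤ x) (hs : 0 < s) (hm : 0 < m) :
    Hf x + x * Real.log s - x * Real.log m ≤ s / m - x := by
  rcases eq_or_lt_of_le hx with h | h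
  · simp [Hf, ← h]
    positivity
  · have harg : 0 < s / (x * m) := by positivity
    have hlog := Real.log_le_sub_one_of_pos harg
    have hrw : Real.log (s / (x * m)) = Real.log s - Real.log x - Real.log m := by
      rw [Real.log_div (ne_of_gt hs) (by positivity), Real.log_mul (ne_of_gt h) (ne_of_gt hm)]
      ring
    have := mul_le_mul_of_nonneg_left hlog hx
    rw [hrw] at this
    have hxm : x * (s / (x * m) - 1) = s / m - x := by
      field_simp
    unfold Hf
    nlinarith
  
lemma sum_Hf_le {α : Type*} (S : Finset α) (x : α → ℝ) (hx : ∀ i ∈ S, 0 ≤ x i)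
    (m : ℝ) (hm1 : 1 ≤ m) (hcard : (S.card : ℝ) ≤ m) :
    ∑ i ∈ S, Hf (x i) ≤ Hf (∑ i ∈ S, x i) + (∑ i ∈ S, x i) * Real.log m := by
  set s := ∑ i ∈ S, x i with hs
  have hs0 : 0 ≤ s := Finset.sum_nonneg hx
  rcases eq_or_lt_of_le hs0 with h | h
  · have hall : ∀ i ∈ S, x i = 0 := by
      intro i hi
      exact (Finset.sum_eq_zero_iff_of_nonneg hx).mp h.symm i hi
    have : ∑ i ∈ S, Hf (x i) = 0 := Finset.sum_eq_zero (fun i hi => by simp [Hf, hall i hi])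
    rw [this, ← h]
    simp [Hf]
  · have hm0 : 0 < m := lt_of_lt_of_le one_pos hm1
    have hsum : ∑ i ∈ S, (Hf (x i) + x i * Real.log s - x i * Real.log m)
        ≤ ∑ i ∈ S, (s / m - x i) :=
      Finset.sum_le_sum (fun i hi => term_bound (x i) s m (hx i hi) h hm0)
    rw [Finset.sum_sub_distrib, Finset.sum_add_distrib, ← Finset.sum_mul, ← Finset.sum_mul,
      Finset.sum_sub_distrib, Finset.sum_const, nsmul_eq_mul] at hsum
    have hcm : (S.card : ℝ) * (s / m) ≤ m * (s / m) :=
      mul_le_mul_of_nonneg_right hcard (by positivity)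
    have hmm : m * (s / m) = s := by field_simp
    simp only [Hf] at hsum ⊢
    linarith

/-- Entropy merging bound: if `p'` is obtained from the concatenation `r` of
`q̃₂` (typical flow after the two-step walk) and the leaked distribution `p̂'`
by merging, per vertex, at most `loadM·k + 1` entries of `r`, then
`H(p') ≥ H(q̃₂) + H(p̂') − log(loadM·k + 1)`. -/
theorem entropy_merging_bound {ι κ V : Type*} [Fintype ι] [Fintype κ]
    [Fintype V] [DecidableEq V]
    (q2 : ι → ℝ) (phat' : κ → ℝ) (loadM k : ℕ)
    (r : ι ⊕ κ → ℝ) (hr : r = Sum.elim q2 phat')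
    (hr0 : ∀ x, 0 ≤ r x) (hr1 : ∑ x, r x ≤ 1)
    (f : ι ⊕ κ → V)
    (hfiber : ∀ v, (univ.filter (fun x => f x = v)).card ≤ loadM * k + 1)
    (p' : V → ℝ)
    (hp' : ∀ v, p' v = ∑ x ∈ univ.filter (fun x => f x = v), r x) :
    (∑ i, Hf (q2 i)) + (∑ j, Hf (phat' j)) - Real.log ((loadM : ℝ) * k + 1)
      ≤ ∑ v, Hf (p' v) := by
  set γ : ℝ := (loadM : ℝ) * k + 1 with hγ
  have h0 : (0:ℝ) ≤ (loadM : ℝ) * k := by positivity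
  have hγ1 : (1:ℝ) ≤ γ := by linarith
  have hkey : ∀ v, ∑ x ∈ univ.filter (fun x => f x = v), Hf (r x)
      ≤ Hf (p' v) + p' v * Real.log γ := by
    intro v
    rw [hp' v]
    refine sum_Hf_le _ _ (fun i _ => hr0 i) γ hγ1 ?_
    have := hfiber v
    calc ((univ.filter (fun x => f x = v)).card : ℝ) ≤ ((loadM * k + 1 : ℕ) : ℝ) := by
          exact_mod_cast this
      _ = γ := by push_cast [hγ]; ring
  have h1 : ∑ x, Hf (r x) ≤ ∑ v, (Hf (p' v) + p' v * Real.log γ) := by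
    rw [← Finset.sum_fiberwise univ f (fun x => Hf (r x))]
    exact Finset.sum_le_sum (fun v _ => hkey v)
  have h2 : ∑ v, (Hf (p' v) + p' v * Real.log γ)
      = ∑ v, Hf (p' v) + (∑ x, r x) * Real.log γ := by
    rw [Finset.sum_add_distrib, ← Finset.sum_mul]
    congr 2
    rw [← Finset.sum_fiberwise univ f r]
    exact Finset.sum_congr rfl (fun v _ => hp' v)
  have hlogγ : 0 ≤ Real.log γ := Real.log_nonneg hγ1
  have h3 : (∑ x, r x) * Real.log γ ≤ Real.log γ := by
    calc (∑ x, r x) * Real.log γ ≤ 1 * Real.log γ :=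
          mul_le_mul_of_nonneg_right hr1 hlogγ
      _ = Real.log γ := one_mul _
  have h4 : ∑ x, Hf (r x) = (∑ i, Hf (q2 i)) + (∑ j, Hf (phat' j)) := by
    subst hr
    rw [Fintype.sum_sum_type]
    simp
  linarith
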